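/- Let q, k be positive integers and let g ∈ ℤ[x₁,...,x_ℓ] be a polynomial of total degree at most k, with coefficients a_i (indexed by multi-indices i). If g(n) ≡ 0 (mod q) for all n ∈ ℤ^ℓ, then q divides k! · gcd of all the coefficients a_i. -/
import Mathlib
open Finset MvPolynomial

/-- Δ of a power, expanded as a sum of lower powers. -/
lemma fwd_pow (v : ℕ) :
    fwdDiff (1:ℤ) (fun x : ℤ => x ^ v) =
      ∑ u ∈ range v, fun x : ℤ => (v.choose u : ℤ) * x ^ u := by
  funext x
  simp only [fwdDiff, Finset.sum_apply]
  rw [add_pow]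
  rw [Finset.sum_range_succ]
  simp [mul_comm]

/-- Iterated differences of a low-degree power vanish. -/
lemma fwd_iter_pow_zero : ∀ v m : ℕ, v < m →
    (fwdDiff (1:ℤ))^[m] (fun x : ℤ => x ^ v) = 0 := by
  intro v
  induction v using Nat.strong_induction_on with
  | _ v IH =>
    intro m hvm
    obtain ⟨m', rfl⟩ : ∃ m', m = m' + 1 := ⟨m - 1, by omega⟩
    rw [Function.iterate_succ_apply, fwd_pow]
    rw [fwdDiff_iter_finset_sum]
    refine Finset.sum_eq_zero fun u hu => ?_
    have hu' : u < v := Finset.mem_range.mp hu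
    have : (fun x : ℤ => (v.choose u : ℤ) * x ^ u)
        = (v.choose u : ℤ) • (fun x : ℤ => x ^ u) := by
      funext x; simp [smul_eq_mul]
    rw [this, fwdDiff_iter_const_smul, IH u hu' m' (by omega)]
    simp

/-- Diagonal: Δ^[m] x^m = m!. -/
lemma fwd_iter_pow_diag : ∀ m : ℕ,
    (fwdDiff (1:ℤ))^[m] (fun x : ℤ => x ^ m) = fun _ => (m.factorial : ℤ) := by
  intro m
  induction m with
  | zero => funext x; simp
  | succ m IH =>
    rw [Function.iterate_succ_apply, fwd_pow, fwdDiff_iter_finset_sum]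
    rw [Finset.sum_range_succ]
    funext x
    simp only [Finset.sum_apply, Pi.add_apply]
    have h1 : ∀ u ∈ range m,
        ((fwdDiff (1:ℤ))^[m] (fun x : ℤ => ((m+1).choose u : ℤ) * x ^ u)) x = 0 := by
      intro u hu
      have : (fun x : ℤ => ((m+1).choose u : ℤ) * x ^ u)
          = ((m+1).choose u : ℤ) • (fun x : ℤ => x ^ u) := by funext x; simp [smul_eq_mul]
      rw [this, fwdDiff_iter_const_smul, fwd_iter_pow_zero u m (Finset.mem_range.mp hu)]
      simp
    rw [Finset.sum_congr rfl h1]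
    have : (fun x : ℤ => ((m+1).choose m : ℤ) * x ^ m)
        = ((m+1).choose m : ℤ) • (fun x : ℤ => x ^ m) := by funext x; simp [smul_eq_mul]
    rw [this, fwdDiff_iter_const_smul, IH]
    simp [Nat.choose_succ_self_right, Nat.factorial_succ]


lemma fwd_sum_form (v m : ℕ) (y : ℤ) :
    (fwdDiff (1:ℤ))^[m] (fun x : ℤ => x ^ v) y
      = ∑ j ∈ range (m+1), ((-1:ℤ)^(m-j) * (m.choose j : ℤ)) * (y + (j:ℤ)) ^ v := by
  rw [fwdDiff_iter_eq_sum_shift]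
  refine Finset.sum_congr rfl fun j _ => ?_
  simp [smul_eq_mul]

lemma fwd_rec (v m : ℕ) (y : ℤ) :
    (fwdDiff (1:ℤ))^[m+1] (fun x : ℤ => x ^ (v+1)) y
      = y * (fwdDiff (1:ℤ))^[m+1] (fun x : ℤ => x ^ v) y
        + ((m:ℤ)+1) * (fwdDiff (1:ℤ))^[m] (fun x : ℤ => x ^ v) (y+1) := by
  rw [fwd_sum_form, fwd_sum_form, fwd_sum_form]
  rw [Finset.mul_sum, Finset.mul_sum]
  have key : ∀ j ∈ range (m+2),
      ((-1:ℤ)^(m+1-j) * ((m+1).choose j : ℤ)) * (y + (j:ℤ)) ^ (v+1)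
      = y * (((-1:ℤ)^(m+1-j) * ((m+1).choose j : ℤ)) * (y + (j:ℤ)) ^ v)
        + ((-1:ℤ)^(m+1-j) * ((m+1).choose j : ℤ) * (j:ℤ)) * (y + (j:ℤ)) ^ v := by
    intro j _
    rw [pow_succ]
    ring
  rw [Finset.sum_congr rfl key, Finset.sum_add_distrib]
  congr 1
  -- now the shifted-index part
  rw [Finset.sum_range_succ']
  simp only [Nat.cast_zero, mul_zero, zero_mul, add_zero]
  refine Finset.sum_congr rfl fun i hi => ?_
  have hi' : i < m + 1 := Finset.mem_range.mp hi
  have hc : ((m+1) : ℤ) * (m.choose i : ℤ) = ((m+1).choose (i+1) : ℤ) * ((i:ℤ)+1) := by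
    have h := Nat.add_one_mul_choose_eq m i
    exact_mod_cast congrArg (Nat.cast : ℕ → ℤ) h
  have hsub : m + 1 - (i+1) = m - i := by omega
  rw [hsub]
  push_cast
  linear_combination (-(-1:ℤ)^(m-i) * (y+1+(i:ℤ))^v) * hc

lemma fwd_dvd : ∀ v m : ℕ, ∀ y : ℤ,
    (m.factorial : ℤ) ∣ (fwdDiff (1:ℤ))^[m] (fun x : ℤ => x ^ v) y := by
  intro v
  induction v with
  | zero =>
    intro m y
    match m with
    | 0 => simp
    | m+1 =>
      have : (fun x : ℤ => x ^ 0) = (fun _ : ℤ => (1:ℤ)) := by funext x; simp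
      rw [Function.iterate_succ_apply, this]
      have : fwdDiff (1:ℤ) (fun _ : ℤ => (1:ℤ)) = fun _ => 0 := by
        funext x; simp [fwdDiff]
      rw [this]
      have : (fwdDiff (1:ℤ))^[m] (fun _ : ℤ => (0:ℤ)) = fun _ => 0 := by
        induction m with
        | zero => rfl
        | succ m IH => rw [Function.iterate_succ_apply, show fwdDiff (1:ℤ) (fun _:ℤ => (0:ℤ)) = fun _ => 0 by funext x; simp [fwdDiff], IH]
      rw [this]
      simp
  | succ v IH =>
    intro m y
    match m with
    | 0 => simp
    | m+1 =>
      rw [fwd_rec]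
      refine dvd_add (Dvd.dvd.mul_left ?_ y) ?_
      · exact IH (m+1) y
      · rw [Nat.factorial_succ]
        push_cast
        exact mul_dvd_mul dvd_rfl (IH m (y+1))

lemma finsupp_sum_univ {ℓ : ℕ} (v : Fin ℓ →₀ ℕ) :
    (v.sum fun _ e => e) = ∑ t, v t :=
  Finsupp.sum_fintype v _ (fun _ => rfl)

lemma key_step (ℓ k q : ℕ) (g : MvPolynomial (Fin ℓ) ℤ)
    (hdeg : g.totalDegree ≤ k)
    (hvan : ∀ n : Fin ℓ → ℤ, (q : ℤ) ∣ eval n g)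
    (m : Fin ℓ →₀ ℕ)
    (IH : ∀ v ∈ g.support, (∀ t, m t ≤ v t) → v ≠ m →
      (q : ℤ) ∣ (k.factorial : ℤ) * g.coeff v) :
    (q : ℤ) ∣ (k.factorial : ℤ) * g.coeff m := by
  by_cases hm : ∑ t, m t ≤ k
  · -- main case
    set F : ℕ := ∏ t, (m t).factorial with hFdef
    have hF : F ∣ k.factorial :=
      (Nat.prod_factorial_dvd_factorial_sum _ _).trans (Nat.factorial_dvd_factorial hm)
    obtain ⟨K, hK⟩ := hF
    set Dv : (Fin ℓ →₀ ℕ) → ℤ :=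
      fun v => ∏ t, (fwdDiff (1:ℤ))^[m t] (fun x : ℤ => x ^ v t) 0 with hDvdef
    set T : ℤ := ∑ j ∈ Fintype.piFinset (fun t => range (m t + 1)),
      (∏ t, ((-1:ℤ)^(m t - j t) * ((m t).choose (j t) : ℤ)))
        * eval (fun t => ((j t : ℕ) : ℤ)) g with hTdef
    have hqT : (q : ℤ) ∣ T := Finset.dvd_sum fun j _ => (hvan _).mul_left _
    have hT : T = ∑ v ∈ g.support, g.coeff v * Dv v := by
      rw [hTdef]
      have : ∀ j ∈ Fintype.piFinset (fun t => range (m t + 1)),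
          (∏ t, ((-1:ℤ)^(m t - j t) * ((m t).choose (j t) : ℤ)))
            * eval (fun t => ((j t : ℕ) : ℤ)) g
          = ∑ v ∈ g.support, g.coeff v *
              ∏ t, (((-1:ℤ)^(m t - j t) * ((m t).choose (j t) : ℤ)) * ((j t : ℕ) : ℤ) ^ v t) := by
        intro j _
        rw [eval_eq', Finset.mul_sum]
        refine Finset.sum_congr rfl fun v _ => ?_
        simp only [Finset.prod_mul_distrib]
        ring
      rw [Finset.sum_congr rfl this, Finset.sum_comm]
      refine Finset.sum_congr rfl fun v _ => ?_
      rw [← Finset.mul_sum]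
      congr 1
      have h1 : Dv v = ∏ t, ∑ j ∈ range (m t + 1),
          ((-1:ℤ)^(m t - j) * ((m t).choose j : ℤ)) * ((j:ℕ):ℤ) ^ v t := by
        rw [hDvdef]
        refine Finset.prod_congr rfl fun t _ => ?_
        rw [fwd_sum_form]
        exact Finset.sum_congr rfl fun i _ => by rw [zero_add]
      rw [h1, prod_univ_sum]
    have hDm : Dv m = (F : ℤ) := by
      rw [hDvdef, hFdef]
      push_cast
      exact Finset.prod_congr rfl fun t _ => by rw [fwd_iter_pow_diag]
    have hsplit : T = (F : ℤ) * g.coeff m + ∑ v ∈ g.support.erase m, g.coeff v * Dv v := by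
      rw [hT]
      by_cases hmem : m ∈ g.support
      · rw [← Finset.add_sum_erase _ _ hmem, hDm, mul_comm]
      · rw [Finset.erase_eq_of_notMem hmem, MvPolynomial.notMem_support_iff.mp hmem]
        ring
    have hKF : (K : ℤ) * (F : ℤ) = (k.factorial : ℤ) := by
      rw [hK]; push_cast; ring
    have hmain : (k.factorial : ℤ) * g.coeff m
        = (K : ℤ) * T - ∑ v ∈ g.support.erase m, (K : ℤ) * (g.coeff v * Dv v) := by
      rw [hsplit, mul_add, Finset.mul_sum, ← hKF]
      ring
    rw [hmain]
    refine dvd_sub (hqT.mul_left _) (Finset.dvd_sum fun v hv => ?_)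
    obtain ⟨hvne, hvmem⟩ := Finset.mem_erase.mp hv
    by_cases hge : ∀ t, m t ≤ v t
    · have hqv := IH v hvmem hge hvne
      have hc : ∀ t : Fin ℓ, ∃ c : ℤ,
          (fwdDiff (1:ℤ))^[m t] (fun x : ℤ => x ^ v t) 0 = ((m t).factorial : ℤ) * c := by
        intro t
        obtain ⟨c, hc⟩ := fwd_dvd (v t) (m t) 0
        exact ⟨c, hc⟩
      choose c hc using hc
      have : Dv v = (F : ℤ) * ∏ t, c t := by
        rw [hDvdef]
        simp only []
        rw [Finset.prod_congr rfl (fun t _ => hc t), Finset.prod_mul_distrib, hFdef]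
        push_cast
        ring
      rw [this]
      have : (K : ℤ) * (g.coeff v * ((F:ℤ) * ∏ t, c t))
          = ((k.factorial : ℤ) * g.coeff v) * ∏ t, c t := by
        rw [← hKF]; ring
      rw [this]
      exact hqv.mul_right _
    · push_neg at hge
      obtain ⟨t, ht⟩ := hge
      have : Dv v = 0 := by
        refine Finset.prod_eq_zero (Finset.mem_univ t) ?_
        rw [fwd_iter_pow_zero (v t) (m t) ht]
        rfl
      rw [this]
      simp
  · -- degree too big: coefficient is zero
    have : g.coeff m = 0 := by
      apply MvPolynomial.coeff_eq_zero_of_totalDegree_lt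
      have h1 : ∑ i ∈ m.support, m i = ∑ t, m t := by
        refine Finset.sum_subset (Finset.subset_univ _) fun t _ ht => ?_
        exact Finsupp.notMem_support_iff.mp ht
      omega
    rw [this]
    simp


open MvPolynomial

/-- If `g ∈ ℤ[x₁,…,x_ℓ]` of total degree at most `k` vanishes identically
modulo `q`, then `q ∣ k! · gcd(coefficients of g)`. -/
theorem stmt_1 (ℓ k q : ℕ) (hq : 0 < q) (hk : 0 < k)
    (g : MvPolynomial (Fin ℓ) ℤ) (hdeg : g.totalDegree ≤ k)
    (hvan : ∀ n : Fin ℓ → ℤ, (q : ℤ) ∣ eval n g) :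
    (q : ℤ) ∣ (k.factorial : ℤ) * g.support.gcd g.coeff := by
  have hsupp : ∀ v ∈ g.support, ∑ t, v t ≤ k := by
    intro v hv
    have := MvPolynomial.le_totalDegree hv
    rw [finsupp_sum_univ] at this
    omega
  have step : ∀ j : ℕ, ∀ m : Fin ℓ →₀ ℕ, k ≤ (∑ t, m t) + j →
      (q : ℤ) ∣ (k.factorial : ℤ) * g.coeff m := by
    intro j
    induction j with
    | zero =>
      intro m hm
      apply key_step ℓ k q g hdeg hvan m
      intro v hv hge hne
      exfalso
      have h1 : ∑ t, m t < ∑ t, v t := by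
        refine Finset.sum_lt_sum (fun t _ => hge t) ?_
        by_contra h
        push_neg at h
        exact hne (Finsupp.ext fun t => le_antisymm (h t (Finset.mem_univ t)) (hge t))
      have h2 := hsupp v hv
      omega
    | succ j IHj =>
      intro m hm
      apply key_step ℓ k q g hdeg hvan m
      intro v hv hge hne
      apply IHj
      have h1 : ∑ t, m t < ∑ t, v t := by
        refine Finset.sum_lt_sum (fun t _ => hge t) ?_
        by_contra h
        push_neg at h
        exact hne (Finsupp.ext fun t => le_antisymm (h t (Finset.mem_univ t)) (hge t))
      omega
  have all : ∀ v : Fin ℓ →₀ ℕ, (q : ℤ) ∣ (k.factorial : ℤ) * g.coeff v :=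
    fun v => step k v (by omega)
  have hgcd : (q : ℤ) ∣ g.support.gcd (fun v => (k.factorial : ℤ) * g.coeff v) :=
    Finset.dvd_gcd fun v _ => all v
  rwa [Finset.gcd_mul_left, Int.normalize_of_nonneg (by positivity)] at hgcd
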